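/- Let (O, ∂) be a differential K-algebra and (E, ∂_E) a differential module over O that is finite free as an O-module. Let R ∈ Art_K, set O_R := R ⊗_K O with the derivation 1 ⊗ ∂, and give E_R := R ⊗_K E the connection 1 ⊗ ∂_E. (i) Every deformation (F, ∂_F, θ) of E over R is isomorphic, compatibly with the maps to E, to (E_R, (1 ⊗ ∂_E) + μ, canonical projection) for some O_R-linear endomorphism μ of E_R whose reduction modulo m_R is 0. (ii) For two such endomorphisms μ and μ′, the deformations (E_R, (1 ⊗ ∂_E) + μ) and (E_R, (1 ⊗ ∂_E) + μ′) are isomorphic compatibly with the canonical projections to E if and only if there exists an O_R-linear automorphism u of E_R whose reduction modulo m_R is the identity of E and such that u ∘ ((1 ⊗ ∂_E) + μ′) ∘ u⁻¹ = (1 ⊗ ∂_E) + μ. -/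

import Mathlib

open scoped TensorProduct

universe u v w w'

/-- The canonical projection `R ⊗_K E → E ≅ K ⊗_R (R ⊗_K E)` induced by the residue map
`ε : R → K`. -/
noncomputable def stmt10Proj {K : Type u} [Field K] {R : Type v} [CommRing R] [Algebra K R]
    {E : Type w} [AddCommGroup E] [Module K E] (ε : R →ₐ[K] K) :
    R ⊗[K] E →ₗ[K] E :=
  (TensorProduct.lid K E).toLinearMap.comp (LinearMap.rTensor E ε.toLinearMap)

/-- The action of `a : O` on `E_R = R ⊗_K E` through the right factor (`1 ⊗ a`-multiplication,
encoding the `O_R = R ⊗_K O`-module structure of `E_R`). -/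
noncomputable def stmt10Act {K : Type u} [Field K] (R : Type v) [CommRing R] [Algebra K R]
    {O : Type*} [CommRing O] [Algebra K O]
    {E : Type w} [AddCommGroup E] [Module K E] [Module O E] [IsScalarTower K O E] (a : O) :
    R ⊗[K] E →ₗ[K] R ⊗[K] E :=
  LinearMap.lTensor R (Algebra.lsmul K K E a)

/-- The reduction `O_R = R ⊗_K O → O` induced by the residue map `ε : R → K`. -/
noncomputable def stmt10Red {K : Type u} [Field K] {R : Type v} [CommRing R] [Algebra K R]
    {O : Type*} [CommRing O] [Algebra K O] (ε : R →ₐ[K] K) :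
    R ⊗[K] O →ₐ[K] O :=
  Algebra.TensorProduct.productMap ((Algebra.ofId K O).comp ε) (AlgHom.id K O)


section Stmt10Aux

variable {K : Type u} [Field K] {R : Type*} [CommRing R] [Algebra K R]
  {E : Type w} [AddCommGroup E] [Module K E]

lemma stmt10Proj_tmul (ε : R →ₐ[K] K) (r : R) (e : E) :
    stmt10Proj ε (r ⊗ₜ[K] e) = ε r • e := by
  simp [stmt10Proj]

lemma stmt10Proj_smul (ε : R →ₐ[K] K) (r : R) (x : R ⊗[K] E) :
    stmt10Proj ε (r • x) = ε r • stmt10Proj ε x := by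
  induction x using TensorProduct.induction_on with
  | zero => simp
  | tmul s e =>
      rw [TensorProduct.smul_tmul', stmt10Proj_tmul, stmt10Proj_tmul]
      simp [smul_eq_mul, mul_smul]
  | add x y hx hy => rw [smul_add, map_add, hx, hy, map_add, smul_add]

lemma stmt10Act_tmul {O : Type*} [CommRing O] [Algebra K O]
    [Module O E] [IsScalarTower K O E] (a : O) (r : R) (e : E) :
    stmt10Act R a (r ⊗ₜ[K] e) = r ⊗ₜ[K] (a • e) := by
  simp [stmt10Act]

lemma stmt10AuxSup {M : Type*} [AddCommGroup M] [Module R M] (I : Ideal R) (N : Submodule R M)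
    (h : N ⊔ I • (⊤ : Submodule R M) = ⊤) {n : ℕ} (hI : I ^ n = ⊥) : N = ⊤ := by
  have key : ∀ k : ℕ, N ⊔ I ^ k • (⊤ : Submodule R M) = ⊤ := by
    intro k
    induction k with
    | zero => rw [pow_zero, Ideal.one_eq_top, Submodule.top_smul]; exact sup_top_eq N
    | succ k ih =>
        refine le_antisymm le_top ?_
        conv_lhs => rw [← ih]
        refine sup_le le_sup_left ?_
        have : I ^ k • (⊤ : Submodule R M) = I ^ k • N ⊔ I ^ k • (I • ⊤) := by
          rw [← Submodule.smul_sup, h]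
        rw [this]
        refine sup_le (le_trans Submodule.smul_le_right le_sup_left) ?_
        rw [← Submodule.smul_assoc, smul_eq_mul, ← pow_succ]
        exact le_sup_right
  have := key n
  rwa [hI, Submodule.bot_smul, sup_bot_eq] at this

lemma stmt10AuxBot {M : Type*} [AddCommGroup M] [Module R M] (I : Ideal R) (N : Submodule R M)
    (h : N ≤ I • N) {n : ℕ} (hI : I ^ n = ⊥) : N = ⊥ := by
  have key : ∀ k : ℕ, N ≤ I ^ k • N := by
    intro k
    induction k with
    | zero => rw [pow_zero, Ideal.one_eq_top, Submodule.top_smul]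
    | succ k ih =>
        refine le_trans h ?_
        refine le_trans (smul_mono_right I ih) ?_
        rw [← Submodule.smul_assoc, smul_eq_mul, ← pow_succ']
  have := key n
  rw [hI, Submodule.bot_smul, le_bot_iff] at this
  exact this

end Stmt10Aux

set_option maxHeartbeats 1600000

/-- Let `(O, δ)` be a differential `K`-algebra and `(E, dE)` a differential
module over `O`, finite free as an `O`-module.  Let `R` be an Artinian local `K`-algebra with
residue field `K` (witnessed by `ε : R →ₐ[K] K` with kernel the maximal ideal).  Put
`O_R := R ⊗_K O` with derivation `1 ⊗ δ` and `E_R := R ⊗_K E` with connection `1 ⊗ dE`.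

(i) Every deformation `(F, dF, θ)` of `E` over `R` (`F` an `O_R`-module flat over `R`, `dF` a
connection relative to `1 ⊗ δ`, `θ : F → E` an `O_R`-semilinear horizontal map which is
surjective with kernel `m_R • F`) is isomorphic, compatibly with the maps to `E`, to
`(E_R, (1 ⊗ dE) + μ, canonical projection)` for some `O_R`-linear endomorphism `μ` of `E_R`
whose reduction modulo `m_R` is `0`.

(ii) For two such `μ, μ'`, the deformations `(E_R, (1 ⊗ dE) + μ)` and `(E_R, (1 ⊗ dE) + μ')`
are isomorphic compatibly with the canonical projections to `E` if and only if there exists an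
`O_R`-linear automorphism `u` of `E_R` whose reduction modulo `m_R` is the identity of `E`
such that `u ∘ ((1 ⊗ dE) + μ') ∘ u⁻¹ = (1 ⊗ dE) + μ`. -/
theorem stmt_10 {K : Type u} [Field K] [CharZero K]
    {O : Type v} [CommRing O] [Algebra K O] (δ : Derivation K O O)
    {E : Type w} [AddCommGroup E] [Module K E] [Module O E] [IsScalarTower K O E]
    [Module.Free O E] [Module.Finite O E]
    (dE : E →ₗ[K] E) (hdE : ∀ (a : O) (e : E), dE (a • e) = δ a • e + a • dE e)
    {R : Type u} [CommRing R] [Algebra K R] [IsArtinianRing R] [IsLocalRing R]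
    (ε : R →ₐ[K] K) (hε : RingHom.ker ε = IsLocalRing.maximalIdeal R) :
    -- (i)
    (∀ (F : Type w') [AddCommGroup F] [Module K F] [Module R F] [IsScalarTower K R F]
        [Module (R ⊗[K] O) F] [IsScalarTower R (R ⊗[K] O) F],
      Module.Flat R F →
      ∀ (dF : F →+ F) (θ : F →+ E),
        (∀ (c : R ⊗[K] O) (x : F),
          dF (c • x) = (LinearMap.lTensor R δ.toLinearMap) c • x + c • dF x) →
        (∀ (c : R ⊗[K] O) (x : F), θ (c • x) = stmt10Red ε c • θ x) →
        (∀ x : F, θ (dF x) = dE (θ x)) →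
        Function.Surjective θ →
        (∀ x : F, θ x = 0 ↔ x ∈ IsLocalRing.maximalIdeal R • (⊤ : Submodule R F)) →
        ∃ μ : (R ⊗[K] E) →ₗ[R] (R ⊗[K] E),
          (∀ (a : O) (x : R ⊗[K] E), μ (stmt10Act R a x) = stmt10Act R a (μ x)) ∧
          (∀ x : R ⊗[K] E, stmt10Proj ε (μ x) = 0) ∧
          ∃ u : F ≃ₗ[R] (R ⊗[K] E),
            (∀ (a : O) (x : F), u ((1 ⊗ₜ[K] a : R ⊗[K] O) • x) = stmt10Act R a (u x)) ∧
            (∀ x : F, u (dF x) = LinearMap.lTensor R dE (u x) + μ (u x)) ∧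
            (∀ x : F, θ x = stmt10Proj ε (u x)))
    ∧
    -- (ii)
    (∀ μ μ' : (R ⊗[K] E) →ₗ[R] (R ⊗[K] E),
      (∀ (a : O) (x : R ⊗[K] E), μ (stmt10Act R a x) = stmt10Act R a (μ x)) →
      (∀ (a : O) (x : R ⊗[K] E), μ' (stmt10Act R a x) = stmt10Act R a (μ' x)) →
      (∀ x : R ⊗[K] E, stmt10Proj ε (μ x) = 0) →
      (∀ x : R ⊗[K] E, stmt10Proj ε (μ' x) = 0) →
      ((∃ v : (R ⊗[K] E) ≃ₗ[R] (R ⊗[K] E),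
          (∀ (a : O) (x : R ⊗[K] E), v (stmt10Act R a x) = stmt10Act R a (v x)) ∧
          (∀ x : R ⊗[K] E,
            v (LinearMap.lTensor R dE x + μ' x) = LinearMap.lTensor R dE (v x) + μ (v x)) ∧
          (∀ x : R ⊗[K] E, stmt10Proj ε (v x) = stmt10Proj ε x))
        ↔ (∃ u : (R ⊗[K] E) ≃ₗ[R] (R ⊗[K] E),
          (∀ (a : O) (x : R ⊗[K] E), u (stmt10Act R a x) = stmt10Act R a (u x)) ∧
          (∀ e : E, stmt10Proj ε (u ((1 : R) ⊗ₜ[K] e)) = e) ∧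
          (∀ x : R ⊗[K] E,
            u (LinearMap.lTensor R dE (u.symm x) + μ' (u.symm x)) =
              LinearMap.lTensor R dE x + μ x)))) := by
  constructor
  · -- part (i)
    intro F _ _ _ _ _ _ hflat dF θ hdF hθlin hθd hθsurj hker
    classical
    obtain ⟨n, hn⟩ := IsArtinianRing.isNilpotent_jacobson_bot (R := R)
    rw [IsLocalRing.jacobson_eq_maximalIdeal (⊥ : Ideal R) bot_ne_top] at hn
    have hmn : (IsLocalRing.maximalIdeal R) ^ n = ⊥ := by rw [hn]; rfl
    -- basis of E over O and lifts of the basis vectors along θ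
    let b := Module.Free.chooseBasis O E
    choose f hf using fun i => hθsurj (b i)
    -- scalar juggling lemmas
    have hKsmul : ∀ (k : K) (c : R ⊗[K] O) (x : F), (k • c) • x = k • (c • x) := by
      intro k c x
      rw [← algebraMap_smul R k c, smul_assoc, algebraMap_smul]
    have hRsmul : ∀ (r : R) (c : R ⊗[K] O) (x : F), c • (r • x) = r • (c • x) := by
      intro r c x
      rw [← algebraMap_smul (R ⊗[K] O) r x, ← mul_smul, mul_comm, mul_smul,
        algebraMap_smul (R ⊗[K] O) r (c • x)]
    -- the map ψ : E →ₗ[K] F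
    let ψ : E →ₗ[K] F :=
      { toFun := fun e => ∑ i, ((1 : R) ⊗ₜ[K] (b.repr e i)) • f i
        map_add' := by
          intro e e'
          simp only [map_add, Finsupp.add_apply, TensorProduct.tmul_add, add_smul]
          rw [Finset.sum_add_distrib]
        map_smul' := by
          intro k e
          simp only [RingHom.id_apply]
          rw [Finset.smul_sum]
          refine Finset.sum_congr rfl fun i _ => ?_
          have h1 : b.repr (k • e) i = k • b.repr e i := by
            rw [← algebraMap_smul O k e, map_smul, Finsupp.smul_apply, algebraMap_smul]
          rw [h1, TensorProduct.tmul_smul, hKsmul] }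
    have hψ_apply : ∀ e : E, ψ e = ∑ i, ((1 : R) ⊗ₜ[K] (b.repr e i)) • f i := fun _ => rfl
    let φ : R ⊗[K] E →ₗ[R] F := LinearMap.liftBaseChange R ψ
    have hφ_tmul : ∀ (r : R) (e : E), φ (r ⊗ₜ[K] e) = r • ψ e :=
      fun r e => rfl
    -- ψ and φ intertwine the O-action
    have hψact : ∀ (a : O) (e : E), ψ (a • e) = ((1 : R) ⊗ₜ[K] a) • ψ e := by
      intro a e
      rw [hψ_apply, hψ_apply, Finset.smul_sum]
      refine Finset.sum_congr rfl fun i _ => ?_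
      have h1 : b.repr (a • e) i = a * b.repr e i := by
        rw [map_smul, Finsupp.smul_apply, smul_eq_mul]
      have h2 : ((1 : R) ⊗ₜ[K] (a * b.repr e i) : R ⊗[K] O)
          = ((1 : R) ⊗ₜ[K] a) * ((1 : R) ⊗ₜ[K] (b.repr e i)) := by
        rw [Algebra.TensorProduct.tmul_mul_tmul, one_mul]
      rw [h1, h2, mul_smul]
    have hφact : ∀ (a : O) (x : R ⊗[K] E),
        φ (stmt10Act R a x) = ((1 : R) ⊗ₜ[K] a) • φ x := by
      intro a x
      induction x using TensorProduct.induction_on with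
      | zero => simp
      | tmul r e =>
          rw [stmt10Act_tmul, hφ_tmul, hφ_tmul, hψact, hRsmul]
      | add x y hx hy => rw [map_add, map_add, hx, hy, map_add, smul_add]
    -- reduction computations
    have hred : ∀ (r : R) (c : O), stmt10Red ε (r ⊗ₜ[K] c) = ε r • c := by
      intro r c
      simp [stmt10Red, Algebra.TensorProduct.productMap_apply_tmul, Algebra.ofId_apply,
        Algebra.smul_def]
    have hθR : ∀ (r : R) (x : F), θ (r • x) = ε r • θ x := by
      intro r x
      rw [← algebraMap_smul (R ⊗[K] O) r x, hθlin]
      have h1 : stmt10Red ε (algebraMap R (R ⊗[K] O) r) = ε r • (1 : O) := by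
        rw [Algebra.TensorProduct.algebraMap_apply]
        rw [Algebra.algebraMap_self_apply]
        exact hred r 1
      rw [h1, smul_assoc, one_smul]
    have hθψ : ∀ e : E, θ (ψ e) = e := by
      intro e
      rw [hψ_apply, map_sum]
      have h1 : ∀ i ∈ Finset.univ, θ (((1 : R) ⊗ₜ[K] (b.repr e i)) • f i)
          = b.repr e i • b i := fun i _ => by
        rw [hθlin, hred, map_one, one_smul, hf]
      rw [Finset.sum_congr rfl h1]
      exact b.sum_repr e
    have hθφ : ∀ x : R ⊗[K] E, θ (φ x) = stmt10Proj ε x := by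
      intro x
      induction x using TensorProduct.induction_on with
      | zero => simp
      | tmul r e => rw [hφ_tmul, hθR, hθψ, stmt10Proj_tmul]
      | add x y hx hy => rw [map_add, map_add, hx, hy, map_add]
    -- elements with vanishing projection lie in m • ⊤
    have hdiff : ∀ x : R ⊗[K] E, x - (1 : R) ⊗ₜ[K] (stmt10Proj ε x)
        ∈ (IsLocalRing.maximalIdeal R) • (⊤ : Submodule R (R ⊗[K] E)) := by
      intro x
      induction x using TensorProduct.induction_on with
      | zero =>
          rw [map_zero, TensorProduct.tmul_zero, sub_zero]
          exact Submodule.zero_mem _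
      | tmul r e =>
          have h1 : (1 : R) ⊗ₜ[K] (stmt10Proj ε (r ⊗ₜ[K] e)) = algebraMap K R (ε r) ⊗ₜ[K] e := by
            rw [stmt10Proj_tmul, TensorProduct.tmul_smul, TensorProduct.smul_tmul',
              ← Algebra.algebraMap_eq_smul_one]
          rw [h1, ← TensorProduct.sub_tmul]
          have h2 : (r - algebraMap K R (ε r)) ⊗ₜ[K] e
              = (r - algebraMap K R (ε r)) • ((1 : R) ⊗ₜ[K] e) := by
            rw [TensorProduct.smul_tmul', smul_eq_mul, mul_one]
          rw [h2]
          refine Submodule.smul_mem_smul ?_ Submodule.mem_top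
          rw [← hε, RingHom.mem_ker, map_sub, AlgHom.commutes, Algebra.algebraMap_self_apply, sub_self]
      | add x y hx hy =>
          rw [map_add, TensorProduct.tmul_add, add_sub_add_comm]
          exact Submodule.add_mem _ hx hy
    -- surjectivity of φ
    have hrange : LinearMap.range φ = ⊤ := by
      refine stmt10AuxSup (IsLocalRing.maximalIdeal R) _ ?_ hmn
      rw [eq_top_iff]
      rintro y -
      have h0 : θ (y - φ ((1 : R) ⊗ₜ[K] θ y)) = 0 := by
        rw [map_sub, hθφ, stmt10Proj_tmul, map_one, one_smul, sub_self]
      have h1 := (hker _).mp h0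
      have h2 : y = φ ((1 : R) ⊗ₜ[K] θ y) + (y - φ ((1 : R) ⊗ₜ[K] θ y)) := by abel
      have h3 := Submodule.add_mem_sup (LinearMap.mem_range_self φ ((1 : R) ⊗ₜ[K] θ y)) h1
      rwa [← h2] at h3
    have hsurj : Function.Surjective φ := LinearMap.range_eq_top.mp hrange
    -- injectivity of φ, using flatness of F
    have hkerφ : LinearMap.ker φ = ⊥ := by
      refine stmt10AuxBot (IsLocalRing.maximalIdeal R) _ ?_ hmn
      intro x hx
      rw [LinearMap.mem_ker] at hx
      have hx0 : stmt10Proj ε x = 0 := by rw [← hθφ x, hx, map_zero]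
      have hxm : x ∈ (IsLocalRing.maximalIdeal R) • (⊤ : Submodule R (R ⊗[K] E)) := by
        have h := hdiff x
        rwa [hx0, TensorProduct.tmul_zero, sub_zero] at h
      set τP : (↥(IsLocalRing.maximalIdeal R)) ⊗[R] (R ⊗[K] E) →ₗ[R] R ⊗[K] E :=
        (TensorProduct.lid R (R ⊗[K] E)).toLinearMap
          ∘ₗ LinearMap.rTensor (R ⊗[K] E) (IsLocalRing.maximalIdeal R).subtype with hτP
      set τF : (↥(IsLocalRing.maximalIdeal R)) ⊗[R] F →ₗ[R] F :=
        (TensorProduct.lid R F).toLinearMap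
          ∘ₗ LinearMap.rTensor F (IsLocalRing.maximalIdeal R).subtype with hτF
      have hτPt : ∀ (c : ↥(IsLocalRing.maximalIdeal R)) (p : R ⊗[K] E),
          τP (c ⊗ₜ[R] p) = (c : R) • p := by
        intro c p; simp [hτP]
      have hτFt : ∀ (c : ↥(IsLocalRing.maximalIdeal R)) (p : F),
          τF (c ⊗ₜ[R] p) = (c : R) • p := by
        intro c p; simp [hτF]
      obtain ⟨ξ, hξ⟩ : ∃ ξ, τP ξ = x := by
        refine Submodule.smul_induction_on hxm
          (fun r hr p _ => ⟨(⟨r, hr⟩ : ↥(IsLocalRing.maximalIdeal R)) ⊗ₜ[R] p, hτPt _ _⟩) ?_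
        rintro y z ⟨ξ₁, h₁⟩ ⟨ξ₂, h₂⟩
        exact ⟨ξ₁ + ξ₂, by rw [map_add, h₁, h₂]⟩
      have hcomm : ∀ ζ : (↥(IsLocalRing.maximalIdeal R)) ⊗[R] (R ⊗[K] E),
          τF (LinearMap.lTensor _ φ ζ) = φ (τP ζ) := by
        intro ζ
        induction ζ using TensorProduct.induction_on with
        | zero => simp
        | tmul c p => rw [LinearMap.lTensor_tmul, hτFt, hτPt, map_smul]
        | add p q hp hq => rw [map_add, map_add, hp, hq, ← map_add, ← map_add]
      have hτFinj : Function.Injective τF := by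
        rw [hτF, LinearMap.coe_comp]
        exact (TensorProduct.lid R F).injective.comp
          ((Module.Flat.iff_rTensor_injective' (R := R) (M := F)).mp hflat (IsLocalRing.maximalIdeal R))
      have hξ0 : LinearMap.lTensor (↥(IsLocalRing.maximalIdeal R)) φ ξ = 0 := by
        apply hτFinj
        rw [hcomm, hξ, hx, map_zero]
      have hexact := lTensor_exact (M := LinearMap.ker φ) (↥(IsLocalRing.maximalIdeal R))
        (LinearMap.exact_subtype_ker_map φ) hsurj
      obtain ⟨η, hη⟩ := (hexact ξ).mp hξ0
      have hmem : ∀ η₀ : (↥(IsLocalRing.maximalIdeal R)) ⊗[R] ↥(LinearMap.ker φ),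
          τP (LinearMap.lTensor _ (LinearMap.ker φ).subtype η₀)
            ∈ (IsLocalRing.maximalIdeal R) • LinearMap.ker φ := by
        intro η₀
        induction η₀ using TensorProduct.induction_on with
        | zero => simp
        | tmul c y =>
            rw [LinearMap.lTensor_tmul, Submodule.coe_subtype, hτPt]
            exact Submodule.smul_mem_smul c.2 y.2
        | add p q hp hq => rw [map_add, map_add]; exact Submodule.add_mem _ hp hq
      rw [← hξ, ← hη]
      exact hmem η
    have hinj : Function.Injective φ := LinearMap.ker_eq_bot.mp hkerφ
    -- the isomorphism and μ
    let Φ : (R ⊗[K] E) ≃ₗ[R] F := LinearEquiv.ofBijective φ ⟨hinj, hsurj⟩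
    have hΦ : ∀ x, Φ x = φ x := fun _ => rfl
    let uE : F ≃ₗ[R] R ⊗[K] E := Φ.symm
    have huφ' : ∀ y : F, φ (uE y) = y := fun y => by
      rw [← hΦ]; exact Φ.apply_symm_apply y
    have huφ : ∀ x, uE (φ x) = x := fun x => by
      have : uE (Φ x) = x := Φ.symm_apply_apply x
      rwa [hΦ] at this
    have huO : ∀ (c : O) (y : F), uE (((1 : R) ⊗ₜ[K] c) • y) = stmt10Act R c (uE y) := by
      intro c y
      have h1 := hφact c (uE y)
      rw [huφ'] at h1
      rw [← h1, huφ]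
    have hprojU : ∀ y : F, stmt10Proj ε (uE y) = θ y := by
      intro y; rw [← hθφ (uE y), huφ']
    -- dF as an R-linear map
    have hdFR : ∀ (r : R) (x : F), dF (r • x) = r • dF x := by
      intro r x
      rw [← algebraMap_smul (R ⊗[K] O) r x, hdF]
      have h1 : LinearMap.lTensor R δ.toLinearMap (algebraMap R (R ⊗[K] O) r) = 0 := by
        rw [Algebra.TensorProduct.algebraMap_apply]
        have h2 : (δ.toLinearMap) (1 : O) = 0 := by simp
        rw [LinearMap.lTensor_tmul, h2, TensorProduct.tmul_zero]
      rw [h1, zero_smul, zero_add, algebraMap_smul]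
    let dF' : F →ₗ[R] F :=
      { toFun := dF, map_add' := fun a bb => dF.map_add a bb,
        map_smul' := fun r x => by simp only [RingHom.id_apply]; exact hdFR r x }
    -- lTensor dE as an R-linear map
    have hdER : ∀ (r : R) (x : R ⊗[K] E),
        LinearMap.lTensor R dE (r • x) = r • LinearMap.lTensor R dE x := by
      intro r x
      induction x using TensorProduct.induction_on with
      | zero => simp
      | tmul s e =>
          rw [TensorProduct.smul_tmul', LinearMap.lTensor_tmul, LinearMap.lTensor_tmul,
            TensorProduct.smul_tmul']
      | add p q hp hq => rw [smul_add, map_add, hp, hq, map_add, smul_add]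
    let dP : (R ⊗[K] E) →ₗ[R] R ⊗[K] E :=
      { toFun := LinearMap.lTensor R dE, map_add' := fun a bb => map_add _ a bb,
        map_smul' := fun r x => by simp only [RingHom.id_apply]; exact hdER r x }
    let μ : (R ⊗[K] E) →ₗ[R] R ⊗[K] E := uE.toLinearMap ∘ₗ dF' ∘ₗ Φ.toLinearMap - dP
    have hμ : ∀ x, μ x = uE (dF (φ x)) - LinearMap.lTensor R dE x := fun x => rfl
    -- action of lTensor dE on the O-action
    have hdPact : ∀ (a : O) (x : R ⊗[K] E), LinearMap.lTensor R dE (stmt10Act R a x)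
        = stmt10Act R (δ a) x + stmt10Act R a (LinearMap.lTensor R dE x) := by
      intro a x
      induction x using TensorProduct.induction_on with
      | zero => simp
      | tmul s e =>
          rw [stmt10Act_tmul, LinearMap.lTensor_tmul, LinearMap.lTensor_tmul,
            stmt10Act_tmul, stmt10Act_tmul, hdE, TensorProduct.tmul_add]
      | add p q hp hq => simp only [map_add, hp, hq]; abel
    refine ⟨μ, ?_, ?_, uE, huO, ?_, fun x => (hprojU x).symm⟩
    · intro a x
      rw [hμ, hμ]
      rw [hφact a x, hdF]
      have h2 : LinearMap.lTensor R δ.toLinearMap ((1 : R) ⊗ₜ[K] a) = (1 : R) ⊗ₜ[K] (δ a) := by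
        rw [LinearMap.lTensor_tmul]; rfl
      rw [h2, map_add, huO, huO, hdPact, huφ, map_sub (stmt10Act R a)]
      abel
    · intro x
      have hprojdP : ∀ y : R ⊗[K] E,
          stmt10Proj ε (LinearMap.lTensor R dE y) = dE (stmt10Proj ε y) := by
        intro y
        induction y using TensorProduct.induction_on with
        | zero => simp
        | tmul s e => rw [LinearMap.lTensor_tmul, stmt10Proj_tmul, stmt10Proj_tmul, map_smul]
        | add p q hp hq => rw [map_add, map_add, hp, hq, map_add, map_add]
      rw [hμ, map_sub, hprojU, hθd, hθφ, hprojdP, sub_self]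
    · intro x
      have h1 := hμ (uE x)
      rw [huφ'] at h1
      rw [h1]
      abel
  · -- part (ii)
    intro mu mu' hmuO hmu'O hmu0 hmu'0
    constructor
    · rintro ⟨v, hv1, hv2, hv3⟩
      refine ⟨v, hv1, ?_, ?_⟩
      · intro e
        rw [hv3, stmt10Proj_tmul, map_one, one_smul]
      · intro x
        have := hv2 (v.symm x)
        rwa [v.apply_symm_apply] at this
    · rintro ⟨w, hw1, hw2, hw3⟩
      refine ⟨w, hw1, ?_, ?_⟩
      · intro x
        have := hw3 (w x)
        rwa [w.symm_apply_apply] at this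
      · intro x
        induction x using TensorProduct.induction_on with
        | zero => simp
        | tmul r e =>
            have h1 : (r ⊗ₜ[K] e : R ⊗[K] E) = r • ((1 : R) ⊗ₜ[K] e) := by
              rw [TensorProduct.smul_tmul', smul_eq_mul, mul_one]
            rw [h1, map_smul, stmt10Proj_smul, stmt10Proj_smul, hw2]
            rw [stmt10Proj_tmul, map_one, one_smul]
        | add x y hx hy => rw [map_add, map_add, map_add, hx, hy]
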